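/- Let {F_j}_{j=1}^{mn} be an orthonormal basis of M_{m,n}(ℂ) under the trace inner product, and let L(X) = ∑_{j=1}^p γ_j F_j X F_j† − ∑_{j=p+1}^{mn} γ_j F_j X F_j† with all γ_j ≥ 0. Fix 1 ≤ k ≤ min{m,n} and suppose ξ_k := 1 − max W_k(∑_{j=p+1}^{mn} F_j† F_j) > 0. If γ_i ≥ ξ_k^{-1} · max W_k(∑_{j=p+1}^{mn} γ_j F_j† F_j) for all i = 1, …, p, then L is k-positive. -/

import Mathlib

open Matrix ComplexOrder

/-- The maximum of the `k`-numerical range of a matrix `A` (for Hermitian `A`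
this is the sum of the `k` largest eigenvalues). -/
noncomputable def maxWk {N : ℕ} (k : ℕ) (A : Matrix (Fin N) (Fin N) ℂ) : ℝ :=
  sSup {t : ℝ | ∃ f : Fin k → (Fin N → ℂ),
    (∀ i j, star (f i) ⬝ᵥ f j = if i = j then 1 else 0) ∧
    t = (∑ j, star (f j) ⬝ᵥ A.mulVec (f j)).re}

private lemma cs_normSq {ι : Type*} (s : Finset ι) (f g : ι → ℂ) :
    Complex.normSq (∑ t ∈ s, f t * g t) ≤
      (∑ t ∈ s, Complex.normSq (f t)) * (∑ t ∈ s, Complex.normSq (g t)) := by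
  have h1 : ‖∑ t ∈ s, f t * g t‖ ≤
      ∑ t ∈ s, ‖f t‖ * ‖g t‖ := by
    refine le_trans (norm_sum_le _ _) ?_
    exact le_of_eq (Finset.sum_congr rfl fun t _ => norm_mul _ _)
  calc Complex.normSq (∑ t ∈ s, f t * g t)
      = (‖∑ t ∈ s, f t * g t‖) ^ 2 := (Complex.sq_norm _).symm
    _ ≤ (∑ t ∈ s, ‖f t‖ * ‖g t‖) ^ 2 := by
        exact pow_le_pow_left₀ (norm_nonneg _) h1 2
    _ ≤ (∑ t ∈ s, (‖f t‖) ^ 2) * (∑ t ∈ s, (‖g t‖) ^ 2) :=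
        Finset.sum_mul_sq_le_sq_mul_sq s _ _
    _ = _ := by
        simp only [Complex.sq_norm]

private lemma maxWk_bddAbove {N k' : ℕ} (C : Matrix (Fin N) (Fin N) ℂ) :
    BddAbove {t : ℝ | ∃ f : Fin k' → (Fin N → ℂ),
      (∀ i j, star (f i) ⬝ᵥ f j = if i = j then 1 else 0) ∧
      t = (∑ j, star (f j) ⬝ᵥ C.mulVec (f j)).re} := by
  refine ⟨k' * ∑ a : Fin N, ∑ b : Fin N, ‖C a b‖, ?_⟩
  rintro t ⟨f, hf, rfl⟩
  have hb : ∀ j a, ‖f j a‖ ≤ 1 := by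
    intro j a
    have h1 : (∑ b, Complex.normSq (f j b) : ℂ) = 1 := by
      have := hf j j
      simp only [if_true, eq_self_iff_true] at this
      rw [← this]
      simp [dotProduct, Complex.normSq_eq_conj_mul_self]
    have h2 : (∑ b, Complex.normSq (f j b) : ℝ) = 1 := by
      have := congrArg Complex.re h1
      push_cast at this
      simpa using this
    have h3 : Complex.normSq (f j a) ≤ 1 := by
      rw [← h2]
      exact Finset.single_le_sum (fun b _ => Complex.normSq_nonneg _) (Finset.mem_univ a)
    have := Complex.sq_norm (f j a)
    nlinarith [norm_nonneg (f j a)]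
  calc (∑ j, star (f j) ⬝ᵥ C.mulVec (f j)).re
      ≤ ‖∑ j, star (f j) ⬝ᵥ C.mulVec (f j)‖ := Complex.re_le_norm _
    _ ≤ ∑ j : Fin k', ‖star (f j) ⬝ᵥ C.mulVec (f j)‖ := norm_sum_le _ _
    _ ≤ ∑ j : Fin k', ∑ a : Fin N, ∑ b : Fin N, ‖C a b‖ := by
        refine Finset.sum_le_sum fun j _ => ?_
        refine le_trans (norm_sum_le _ _) (Finset.sum_le_sum fun a _ => ?_)
        have expand : star (f j) a * (C.mulVec (f j)) a
            = ∑ b : Fin N, star (f j) a * (C a b * f j b) := by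
          rw [Matrix.mulVec, dotProduct, Finset.mul_sum]
        rw [expand]
        refine le_trans (norm_sum_le _ _) (Finset.sum_le_sum fun b _ => ?_)
        rw [norm_mul, norm_mul]
        have h1 : ‖star (f j) a‖ ≤ 1 := by
          simpa [Pi.star_apply, RCLike.star_def] using hb j a
        have h2 := hb j b
        have h3 : ‖star (f j) a‖ * (‖C a b‖ * ‖f j b‖)
            ≤ 1 * (‖C a b‖ * 1) := by
          gcongr <;> first | exact norm_nonneg _ | positivity
        simpa using h3
    _ = k' * ∑ a : Fin N, ∑ b : Fin N, ‖C a b‖ := by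
        rw [Finset.sum_const, Finset.card_univ, Fintype.card_fin, nsmul_eq_mul]

private lemma le_maxWk {N k' : ℕ} (C : Matrix (Fin N) (Fin N) ℂ) (f : Fin k' → (Fin N → ℂ))
    (hf : ∀ i j, star (f i) ⬝ᵥ f j = if i = j then 1 else 0) :
    (∑ j, star (f j) ⬝ᵥ C.mulVec (f j)).re ≤ maxWk k' C :=
  le_csSup (maxWk_bddAbove C) ⟨f, hf, rfl⟩

-- quadratic form of FᴴF
private lemma dotFF {m' n' : ℕ} (Fj : Matrix (Fin m') (Fin n') ℂ) (v : Fin n' → ℂ) :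
    star v ⬝ᵥ (Fjᴴ * Fj) *ᵥ v = ∑ u, (Complex.normSq (∑ b, Fj u b * v b) : ℂ) := by
  rw [← Matrix.mulVec_mulVec, Matrix.dotProduct_mulVec, ← Matrix.star_mulVec]
  simp only [dotProduct, Pi.star_apply, RCLike.star_def]
  refine Finset.sum_congr rfl fun u _ => ?_
  rw [Complex.normSq_eq_conj_mul_self]
  congr 1 <;> simp [Matrix.mulVec, dotProduct]

private lemma dot_sum_mulVec {N : ℕ} {ι : Type*} (s : Finset ι)
    (M : ι → Matrix (Fin N) (Fin N) ℂ) (v x : Fin N → ℂ) :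
    v ⬝ᵥ (∑ j ∈ s, M j) *ᵥ x = ∑ j ∈ s, v ⬝ᵥ (M j) *ᵥ x := by
  classical
  induction s using Finset.cons_induction with
  | empty => simp
  | cons a s ha ih => rw [Finset.sum_cons, Finset.sum_cons, Matrix.add_mulVec,
      dotProduct_add, ih]

set_option maxHeartbeats 1000000 in
private lemma key {m n p k : ℕ} (hkn : k ≤ n)
    (F : Fin (m * n) → Matrix (Fin m) (Fin n) ℂ)
    (hFc : ∀ q q' : Fin m × Fin n,
      (∑ j, (starRingEnd ℂ) (F j q.1 q.2) * F j q'.1 q'.2) = if q = q' then (1:ℂ) else 0)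
    (γ : Fin (m * n) → ℝ) (hγ : ∀ j, 0 ≤ γ j)
    (hξ : 0 < 1 - maxWk k
      (∑ j ∈ Finset.univ.filter (fun j : Fin (m * n) => ¬ (j : ℕ) < p), (F j)ᴴ * F j))
    (hγbig : ∀ i ∈ Finset.univ.filter (fun j : Fin (m * n) => (j : ℕ) < p),
      γ i ≥ (1 - maxWk k
          (∑ j ∈ Finset.univ.filter (fun j : Fin (m * n) => ¬ (j : ℕ) < p),
            (F j)ᴴ * F j))⁻¹ *
        maxWk k (∑ j ∈ Finset.univ.filter (fun j : Fin (m * n) => ¬ (j : ℕ) < p),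
          (γ j : ℂ) • ((F j)ᴴ * F j)))
    (G : Matrix (Fin n) (Fin m) ℂ)
    (P : Matrix (Fin n) (Fin k) ℂ) (Q : Matrix (Fin k) (Fin m) ℂ) (hG : G = P * Q) :
    ∑ j ∈ Finset.univ.filter (fun j : Fin (m * n) => ¬ (j : ℕ) < p),
        γ j * Complex.normSq (∑ z : Fin m × Fin n, F j z.1 z.2 * G z.2 z.1)
      ≤ ∑ j ∈ Finset.univ.filter (fun j : Fin (m * n) => (j : ℕ) < p),
        γ j * Complex.normSq (∑ z : Fin m × Fin n, F j z.1 z.2 * G z.2 z.1) := by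
  classical
  set ω : ℝ := maxWk k
    (∑ j ∈ Finset.univ.filter (fun j : Fin (m * n) => ¬ (j : ℕ) < p), (F j)ᴴ * F j) with hω
  set μ : ℝ := maxWk k
    (∑ j ∈ Finset.univ.filter (fun j : Fin (m * n) => ¬ (j : ℕ) < p),
      (γ j : ℂ) • ((F j)ᴴ * F j)) with hμ
  set c : Fin (m * n) → ℂ := fun j => ∑ z : Fin m × Fin n, F j z.1 z.2 * G z.2 z.1 with hc
  -- eigen machinery
  have hH : (G * Gᴴ).IsHermitian := isHermitian_mul_conjTranspose_self G
  set H := G * Gᴴ with hHdef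
  set u : Fin n → Fin n → ℂ := fun i => ⇑(hH.eigenvectorBasis i) with hu
  set lam : Fin n → ℝ := hH.eigenvalues with hlam
  have hlam0 : ∀ i, 0 ≤ lam i := fun i =>
    (posSemidef_self_mul_conjTranspose G).eigenvalues_nonneg i
  have horth : ∀ i i', star (u i) ⬝ᵥ u i' = if i = i' then (1:ℂ) else 0 := by
    intro i i'
    have := orthonormal_iff_ite.mp hH.eigenvectorBasis.orthonormal i i'
    rw [EuclideanSpace.inner_eq_star_dotProduct, dotProduct_comm] at this
    exact this
  have hcomp : ∀ b b', (∑ i, u i b * (starRingEnd ℂ) (u i b')) = if b = b' then (1:ℂ) else 0 := by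
    intro b b'
    have h1 : (hH.eigenvectorUnitary : Matrix (Fin n) (Fin n) ℂ) *
        star (hH.eigenvectorUnitary : Matrix (Fin n) (Fin n) ℂ) = 1 :=
      Matrix.mem_unitaryGroup_iff.mp hH.eigenvectorUnitary.2
    have h2 := congrFun (congrFun h1 b) b'
    simp only [Matrix.mul_apply, Matrix.star_apply, Matrix.one_apply,
      Matrix.IsHermitian.eigenvectorUnitary_apply, RCLike.star_def] at h2
    exact h2
  have hmv : ∀ i, H *ᵥ u i = (lam i : ℂ) • u i := by
    intro i
    have := hH.mulVec_eigenvectorBasis i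
    rw [this]
    funext b
    simp [Complex.real_smul]
    rfl
  have hcard : (Finset.univ.filter fun i => lam i ≠ 0).card ≤ k := by
    have h1 : H.rank = Fintype.card {i // lam i ≠ 0} := hH.rank_eq_card_non_zero_eigs
    have h2 : H.rank = G.rank := G.rank_self_mul_conjTranspose
    have h3 : G.rank ≤ k := by
      rw [hG]
      exact le_trans (Matrix.rank_mul_le_left P Q)
        (le_trans P.rank_le_card_width (by simp))
    have h4 : (Finset.univ.filter fun i => lam i ≠ 0).card = Fintype.card {i // lam i ≠ 0} :=
      (Fintype.card_subtype _).symm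
    omega
  -- the vectors w
  set w : Fin n → Fin m → ℂ := fun i => star (Gᴴ *ᵥ u i) with hw
  have hwent : ∀ i v2, w i v2 = ∑ b, (starRingEnd ℂ) (u i b) * G b v2 := by
    intro i v2
    simp [hw, Matrix.mulVec, dotProduct, Matrix.conjTranspose_apply, mul_comm]
  have hwnormC : ∀ i, (∑ v2, (Complex.normSq (w i v2) : ℂ)) = (lam i : ℂ) := by
    intro i
    have e1 : ∑ v2, (Complex.normSq (w i v2) : ℂ) = star (Gᴴ *ᵥ u i) ⬝ᵥ (Gᴴ *ᵥ u i) := by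
      simp only [dotProduct, Pi.star_apply, hw, star_star, RCLike.star_def,
        Complex.normSq_conj]
      exact Finset.sum_congr rfl fun v2 _ => by rw [Complex.normSq_eq_conj_mul_self]
    rw [e1, Matrix.star_mulVec, conjTranspose_conjTranspose, ← Matrix.dotProduct_mulVec,
      Matrix.mulVec_mulVec, ← hHdef, hmv i]
    rw [dotProduct_smul, smul_eq_mul]
    rw [show star (u i) ⬝ᵥ u i = (1:ℂ) by rw [horth i i]; simp]
    ring
  have hwnorm : ∀ i, (∑ v2, Complex.normSq (w i v2)) = lam i := by
    intro i
    have := congrArg Complex.re (hwnormC i)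
    push_cast at this
    simpa using this
  have hw0 : ∀ i, lam i = 0 → ∀ v2, w i v2 = 0 := by
    intro i hli v2
    have h0 : (∑ v2, Complex.normSq (w i v2)) = 0 := by rw [hwnorm i, hli]
    have := (Finset.sum_eq_zero_iff_of_nonneg
      (fun v2 _ => Complex.normSq_nonneg (w i v2))).mp h0 v2 (Finset.mem_univ v2)
    exact Complex.normSq_eq_zero.mp this
  have hGdec : ∀ b v2, G b v2 = ∑ i, u i b * w i v2 := by
    intro b v2
    have e1 : ∀ i : Fin n, u i b * w i v2 = ∑ b', u i b * ((starRingEnd ℂ) (u i b') * G b' v2) := by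
      intro i; rw [hwent, Finset.mul_sum]
    simp only [e1]
    rw [Finset.sum_comm]
    have e2 : ∀ b' : Fin n, (∑ i, u i b * ((starRingEnd ℂ) (u i b') * G b' v2))
        = (∑ i, u i b * (starRingEnd ℂ) (u i b')) * G b' v2 := by
      intro b'; rw [Finset.sum_mul]; exact Finset.sum_congr rfl fun i _ => by ring
    simp only [e2, hcomp]
    simp
  -- choice of k orthonormal vectors
  obtain ⟨T, hST, hTcard⟩ := Finset.exists_superset_card_eq hcard (by simpa using hkn)
  set σ : Fin k → Fin n := fun i => ((T.orderIsoOfFin hTcard) i : Fin n) with hσdef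
  have hσT : ∀ i, σ i ∈ T := fun i => (T.orderIsoOfFin hTcard i).2
  have hσinj : Function.Injective σ := fun i j h =>
    (T.orderIsoOfFin hTcard).injective (Subtype.ext h)
  have hTsumC : ∀ g : Fin n → ℂ, ∑ i ∈ T, g i = ∑ i : Fin k, g (σ i) := by
    intro g
    rw [← Finset.sum_coe_sort T g]
    exact (Equiv.sum_comp (T.orderIsoOfFin hTcard).toEquiv (fun x : T => g ↑x)).symm
  have hTsumR : ∀ g : Fin n → ℝ, ∑ i ∈ T, g i = ∑ i : Fin k, g (σ i) := by
    intro g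
    rw [← Finset.sum_coe_sort T g]
    exact (Equiv.sum_comp (T.orderIsoOfFin hTcard).toEquiv (fun x : T => g ↑x)).symm
  have hwT0 : ∀ i, i ∉ T → ∀ v2, w i v2 = 0 := by
    intro i hiT
    refine hw0 i ?_
    by_contra hne
    exact hiT (hST (Finset.mem_filter.mpr ⟨Finset.mem_univ i, hne⟩))
  -- decomposition of c j over T
  have hcT : ∀ j, c j = ∑ z ∈ T ×ˢ (Finset.univ : Finset (Fin m)),
      w z.1 z.2 * (∑ b, F j z.2 b * u z.1 b) := by
    intro j
    calc c j = ∑ z : Fin m × Fin n, ∑ i : Fin n, w i z.1 * (F j z.1 z.2 * u i z.2) := by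
          refine Finset.sum_congr rfl fun z _ => ?_
          rw [hGdec z.2 z.1, Finset.mul_sum]
          exact Finset.sum_congr rfl fun i _ => by ring
      _ = ∑ i : Fin n, ∑ z : Fin m × Fin n, w i z.1 * (F j z.1 z.2 * u i z.2) :=
          Finset.sum_comm
      _ = ∑ i ∈ T, ∑ z : Fin m × Fin n, w i z.1 * (F j z.1 z.2 * u i z.2) := by
          symm
          refine Finset.sum_subset (Finset.subset_univ T) fun i _ hiT => ?_
          exact Finset.sum_eq_zero fun z _ => by rw [hwT0 i hiT z.1, zero_mul]
      _ = ∑ z ∈ T ×ˢ (Finset.univ : Finset (Fin m)), w z.1 z.2 * (∑ b, F j z.2 b * u z.1 b) := by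
          rw [Finset.sum_product]
          refine Finset.sum_congr rfl fun i _ => ?_
          rw [Fintype.sum_prod_type]
          refine Finset.sum_congr rfl fun v2 _ => ?_
          rw [Finset.mul_sum]
  -- Cauchy-Schwarz
  have hCS : ∀ j, Complex.normSq (c j) ≤
      (∑ z ∈ T ×ˢ (Finset.univ : Finset (Fin m)), Complex.normSq (w z.1 z.2)) *
      (∑ z ∈ T ×ˢ (Finset.univ : Finset (Fin m)), Complex.normSq (∑ b, F j z.2 b * u z.1 b)) := by
    intro j
    rw [hcT j]
    exact cs_normSq _ _ _
  -- total weight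
  set WG : ℝ := ∑ z : Fin m × Fin n, Complex.normSq (G z.2 z.1) with hWGdef
  have hWG0 : 0 ≤ WG := Finset.sum_nonneg fun z _ => Complex.normSq_nonneg _
  have hWGC : ∑ i : Fin n, ∑ v2 : Fin m, (Complex.normSq (w i v2) : ℂ)
      = ∑ z : Fin m × Fin n, (Complex.normSq (G z.2 z.1) : ℂ) := by
    have e1 : ∀ i v2, (Complex.normSq (w i v2) : ℂ)
        = ∑ b, ∑ b', (u i b * (starRingEnd ℂ) (u i b')) *
            ((starRingEnd ℂ) (G b v2) * G b' v2) := by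
      intro i v2
      rw [Complex.normSq_eq_conj_mul_self, hwent i v2, map_sum, Finset.sum_mul_sum]
      refine Finset.sum_congr rfl fun b _ => Finset.sum_congr rfl fun b' _ => ?_
      simp only [_root_.map_mul, Complex.conj_conj]
      ring
    have e2 : ∀ v2 : Fin m, ∑ i : Fin n, ∑ b, ∑ b', (u i b * (starRingEnd ℂ) (u i b')) *
        ((starRingEnd ℂ) (G b v2) * G b' v2)
        = ∑ b, ∑ b', (∑ i, u i b * (starRingEnd ℂ) (u i b')) *
            ((starRingEnd ℂ) (G b v2) * G b' v2) := by
      intro v2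
      rw [Finset.sum_comm]
      refine Finset.sum_congr rfl fun b _ => ?_
      rw [Finset.sum_comm]
      refine Finset.sum_congr rfl fun b' _ => ?_
      rw [Finset.sum_mul]
    calc ∑ i : Fin n, ∑ v2 : Fin m, (Complex.normSq (w i v2) : ℂ)
        = ∑ i : Fin n, ∑ v2 : Fin m, ∑ b, ∑ b', (u i b * (starRingEnd ℂ) (u i b')) *
            ((starRingEnd ℂ) (G b v2) * G b' v2) := by simp only [e1]
      _ = ∑ v2 : Fin m, ∑ i : Fin n, ∑ b, ∑ b', (u i b * (starRingEnd ℂ) (u i b')) *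
            ((starRingEnd ℂ) (G b v2) * G b' v2) := Finset.sum_comm
      _ = ∑ v2 : Fin m, ∑ b, ∑ b', (∑ i, u i b * (starRingEnd ℂ) (u i b')) *
            ((starRingEnd ℂ) (G b v2) * G b' v2) := Finset.sum_congr rfl fun v2 _ => e2 v2
      _ = ∑ v2 : Fin m, ∑ b, (Complex.normSq (G b v2) : ℂ) := by
          refine Finset.sum_congr rfl fun v2 _ => Finset.sum_congr rfl fun b _ => ?_
          simp only [hcomp, ite_mul, one_mul, zero_mul, Finset.sum_ite_eq, Finset.mem_univ,
            if_true]
          rw [Complex.normSq_eq_conj_mul_self]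
      _ = ∑ z : Fin m × Fin n, (Complex.normSq (G z.2 z.1) : ℂ) := by
          rw [Fintype.sum_prod_type]
  have hWGreal : ∑ i : Fin n, lam i = WG := by
    have := congrArg Complex.re hWGC
    rw [Complex.re_sum, Complex.re_sum] at this
    simp only [Complex.re_sum, Complex.ofReal_re] at this
    rw [hWGdef]
    rw [← this]
    exact Finset.sum_congr rfl fun i _ => (hwnorm i).symm
  have hwTbound : (∑ z ∈ T ×ˢ (Finset.univ : Finset (Fin m)), Complex.normSq (w z.1 z.2)) ≤ WG := by
    rw [Finset.sum_product]
    calc ∑ i ∈ T, ∑ v2, Complex.normSq (w i v2) = ∑ i ∈ T, lam i :=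
          Finset.sum_congr rfl fun i _ => hwnorm i
      _ ≤ ∑ i : Fin n, lam i :=
          Finset.sum_le_sum_of_subset_of_nonneg (Finset.subset_univ T) fun i _ _ => hlam0 i
      _ = WG := hWGreal
  -- the quantity t j
  set t : Fin (m * n) → ℝ := fun j =>
    ∑ z ∈ T ×ˢ (Finset.univ : Finset (Fin m)), Complex.normSq (∑ b, F j z.2 b * u z.1 b) with ht
  have ht0 : ∀ j, 0 ≤ t j := fun j => Finset.sum_nonneg fun z _ => Complex.normSq_nonneg _
  have hCS' : ∀ j, Complex.normSq (c j) ≤ WG * t j := fun j =>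
    le_trans (hCS j) (mul_le_mul_of_nonneg_right hwTbound (ht0 j))
  have ht_eq : ∀ j, t j = ∑ i ∈ T, (star (u i) ⬝ᵥ ((F j)ᴴ * F j) *ᵥ u i).re := by
    intro j
    show (∑ z ∈ T ×ˢ (Finset.univ : Finset (Fin m)),
      Complex.normSq (∑ b, F j z.2 b * u z.1 b)) = _
    rw [Finset.sum_product]
    refine Finset.sum_congr rfl fun i _ => ?_
    rw [dotFF (F j) (u i), Complex.re_sum]
    simp
  -- the orthonormal family
  set f : Fin k → Fin n → ℂ := fun i => u (σ i) with hf
  have hforth : ∀ i j, star (f i) ⬝ᵥ f j = if i = j then (1:ℂ) else 0 := by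
    intro i j
    rw [hf]
    simp only []
    rw [horth (σ i) (σ j)]
    simp [hσinj.eq_iff]
  -- bounds via maxWk
  have hsum_t_neg : (∑ j ∈ Finset.univ.filter (fun j : Fin (m * n) => ¬ (j : ℕ) < p), t j) ≤ ω := by
    calc ∑ j ∈ Finset.univ.filter (fun j : Fin (m * n) => ¬ (j : ℕ) < p), t j
        = ∑ j ∈ Finset.univ.filter (fun j : Fin (m * n) => ¬ (j : ℕ) < p),
            ∑ i ∈ T, (star (u i) ⬝ᵥ ((F j)ᴴ * F j) *ᵥ u i).re :=
          Finset.sum_congr rfl fun j _ => ht_eq j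
      _ = ∑ i ∈ T, ∑ j ∈ Finset.univ.filter (fun j : Fin (m * n) => ¬ (j : ℕ) < p),
            (star (u i) ⬝ᵥ ((F j)ᴴ * F j) *ᵥ u i).re := Finset.sum_comm
      _ = ∑ i : Fin k, ∑ j ∈ Finset.univ.filter (fun j : Fin (m * n) => ¬ (j : ℕ) < p),
            (star (f i) ⬝ᵥ ((F j)ᴴ * F j) *ᵥ f i).re := hTsumR _
      _ = (∑ i : Fin k, star (f i) ⬝ᵥ
            ((∑ j ∈ Finset.univ.filter (fun j : Fin (m * n) => ¬ (j : ℕ) < p),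
              (F j)ᴴ * F j)) *ᵥ f i).re := by
          rw [Complex.re_sum]
          refine Finset.sum_congr rfl fun i _ => ?_
          rw [dot_sum_mulVec, Complex.re_sum]
      _ ≤ ω := hω ▸ le_maxWk _ f hforth
  have hsum_γt_neg : (∑ j ∈ Finset.univ.filter (fun j : Fin (m * n) => ¬ (j : ℕ) < p),
      γ j * t j) ≤ μ := by
    calc ∑ j ∈ Finset.univ.filter (fun j : Fin (m * n) => ¬ (j : ℕ) < p), γ j * t j
        = ∑ j ∈ Finset.univ.filter (fun j : Fin (m * n) => ¬ (j : ℕ) < p),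
            ∑ i ∈ T, γ j * (star (u i) ⬝ᵥ ((F j)ᴴ * F j) *ᵥ u i).re := by
          refine Finset.sum_congr rfl fun j _ => ?_
          rw [ht_eq j, Finset.mul_sum]
      _ = ∑ i ∈ T, ∑ j ∈ Finset.univ.filter (fun j : Fin (m * n) => ¬ (j : ℕ) < p),
            γ j * (star (u i) ⬝ᵥ ((F j)ᴴ * F j) *ᵥ u i).re := Finset.sum_comm
      _ = ∑ i : Fin k, ∑ j ∈ Finset.univ.filter (fun j : Fin (m * n) => ¬ (j : ℕ) < p),
            γ j * (star (f i) ⬝ᵥ ((F j)ᴴ * F j) *ᵥ f i).re := hTsumR _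
      _ = (∑ i : Fin k, star (f i) ⬝ᵥ
            ((∑ j ∈ Finset.univ.filter (fun j : Fin (m * n) => ¬ (j : ℕ) < p),
              (γ j : ℂ) • ((F j)ᴴ * F j))) *ᵥ f i).re := by
          rw [Complex.re_sum]
          refine Finset.sum_congr rfl fun i _ => ?_
          rw [dot_sum_mulVec, Complex.re_sum]
          refine Finset.sum_congr rfl fun j _ => ?_
          rw [Matrix.smul_mulVec, dotProduct_smul, smul_eq_mul, Complex.mul_re]
          simp
      _ ≤ μ := hμ ▸ le_maxWk _ f hforth
  have hμ0 : 0 ≤ μ := by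
    set e : Fin k → Fin n → ℂ := fun i => Pi.single (Fin.castLE hkn i) (1:ℂ) with he
    have heorth : ∀ i j, star (e i) ⬝ᵥ e j = if i = j then (1:ℂ) else 0 := by
      intro i j
      simp only [he, dotProduct, Pi.star_apply, Pi.single_apply,
        apply_ite (star : ℂ → ℂ), star_one, star_zero, ite_mul, zero_mul, one_mul]
      rw [Finset.sum_ite_eq' Finset.univ (Fin.castLE hkn i)
        (fun a => if a = Fin.castLE hkn j then (1:ℂ) else 0)]
      simp only [Finset.mem_univ, if_true]
      by_cases h : i = j
      · simp [h]
      · have : Fin.castLE hkn i ≠ Fin.castLE hkn j := fun hc => h (Fin.castLE_injective hkn hc)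
        simp [h, this]
    have hval : 0 ≤ (∑ i : Fin k, star (e i) ⬝ᵥ
        ((∑ j ∈ Finset.univ.filter (fun j : Fin (m * n) => ¬ (j : ℕ) < p),
          (γ j : ℂ) • ((F j)ᴴ * F j))) *ᵥ e i).re := by
      rw [Complex.re_sum]
      refine Finset.sum_nonneg fun i _ => ?_
      rw [dot_sum_mulVec, Complex.re_sum]
      refine Finset.sum_nonneg fun j _ => ?_
      rw [Matrix.smul_mulVec, dotProduct_smul, smul_eq_mul, Complex.mul_re]
      simp only [Complex.ofReal_re, Complex.ofReal_im, zero_mul, sub_zero]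
      refine mul_nonneg (hγ j) ?_
      rw [dotFF, Complex.re_sum]
      refine Finset.sum_nonneg fun a _ => ?_
      simp [Complex.normSq_nonneg]
    exact le_trans hval (hμ ▸ le_maxWk _ e heorth)
  -- Parseval
  have hpars : ∑ j : Fin (m * n), Complex.normSq (c j) = WG := by
    have e1 : ∀ j, (Complex.normSq (c j) : ℂ) = ∑ z : Fin m × Fin n, ∑ z' : Fin m × Fin n,
        ((starRingEnd ℂ) (F j z.1 z.2) * F j z'.1 z'.2) *
          ((starRingEnd ℂ) (G z.2 z.1) * G z'.2 z'.1) := by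
      intro j
      rw [Complex.normSq_eq_conj_mul_self,
        show c j = ∑ z : Fin m × Fin n, F j z.1 z.2 * G z.2 z.1 from rfl,
        map_sum, Finset.sum_mul_sum]
      refine Finset.sum_congr rfl fun z _ => Finset.sum_congr rfl fun z' _ => ?_
      simp only [_root_.map_mul]
      ring
    have e2 : ∑ j : Fin (m * n), (Complex.normSq (c j) : ℂ)
        = ∑ z : Fin m × Fin n, (Complex.normSq (G z.2 z.1) : ℂ) := by
      calc ∑ j : Fin (m * n), (Complex.normSq (c j) : ℂ)
          = ∑ j : Fin (m * n), ∑ z : Fin m × Fin n, ∑ z' : Fin m × Fin n,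
              ((starRingEnd ℂ) (F j z.1 z.2) * F j z'.1 z'.2) *
                ((starRingEnd ℂ) (G z.2 z.1) * G z'.2 z'.1) := by simp only [e1]
        _ = ∑ z : Fin m × Fin n, ∑ j : Fin (m * n), ∑ z' : Fin m × Fin n,
              ((starRingEnd ℂ) (F j z.1 z.2) * F j z'.1 z'.2) *
                ((starRingEnd ℂ) (G z.2 z.1) * G z'.2 z'.1) := Finset.sum_comm
        _ = ∑ z : Fin m × Fin n, ∑ z' : Fin m × Fin n, ∑ j : Fin (m * n),
              ((starRingEnd ℂ) (F j z.1 z.2) * F j z'.1 z'.2) *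
                ((starRingEnd ℂ) (G z.2 z.1) * G z'.2 z'.1) :=
            Finset.sum_congr rfl fun z _ => Finset.sum_comm
        _ = ∑ z : Fin m × Fin n, ∑ z' : Fin m × Fin n,
              (∑ j : Fin (m * n), (starRingEnd ℂ) (F j z.1 z.2) * F j z'.1 z'.2) *
                ((starRingEnd ℂ) (G z.2 z.1) * G z'.2 z'.1) :=
            Finset.sum_congr rfl fun z _ => Finset.sum_congr rfl fun z' _ =>
              (Finset.sum_mul _ _ _).symm
        _ = ∑ z : Fin m × Fin n, (Complex.normSq (G z.2 z.1) : ℂ) := by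
            refine Finset.sum_congr rfl fun z _ => ?_
            simp only [hFc, ite_mul, one_mul, zero_mul, Finset.sum_ite_eq, Finset.mem_univ,
              if_true]
            rw [Complex.normSq_eq_conj_mul_self]
    have e3 := congrArg Complex.re e2
    rw [Complex.re_sum, Complex.re_sum] at e3
    simpa [hWGdef] using e3
  -- final arithmetic
  have hsplit : (∑ j ∈ Finset.univ.filter (fun j : Fin (m * n) => (j : ℕ) < p),
        Complex.normSq (c j))
      + (∑ j ∈ Finset.univ.filter (fun j : Fin (m * n) => ¬ (j : ℕ) < p),
        Complex.normSq (c j)) = WG := by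
    rw [Finset.sum_filter_add_sum_filter_not]
    exact hpars
  have hSn_ub : (∑ j ∈ Finset.univ.filter (fun j : Fin (m * n) => ¬ (j : ℕ) < p),
      Complex.normSq (c j)) ≤ WG * ω := by
    calc ∑ j ∈ Finset.univ.filter (fun j : Fin (m * n) => ¬ (j : ℕ) < p), Complex.normSq (c j)
        ≤ ∑ j ∈ Finset.univ.filter (fun j : Fin (m * n) => ¬ (j : ℕ) < p), WG * t j :=
          Finset.sum_le_sum fun j _ => hCS' j
      _ = WG * ∑ j ∈ Finset.univ.filter (fun j : Fin (m * n) => ¬ (j : ℕ) < p), t j :=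
          (Finset.mul_sum _ _ _).symm
      _ ≤ WG * ω := mul_le_mul_of_nonneg_left hsum_t_neg hWG0
  have hSγn : (∑ j ∈ Finset.univ.filter (fun j : Fin (m * n) => ¬ (j : ℕ) < p),
      γ j * Complex.normSq (c j)) ≤ WG * μ := by
    calc ∑ j ∈ Finset.univ.filter (fun j : Fin (m * n) => ¬ (j : ℕ) < p),
          γ j * Complex.normSq (c j)
        ≤ ∑ j ∈ Finset.univ.filter (fun j : Fin (m * n) => ¬ (j : ℕ) < p),
            γ j * (WG * t j) :=
          Finset.sum_le_sum fun j _ => mul_le_mul_of_nonneg_left (hCS' j) (hγ j)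
      _ = WG * ∑ j ∈ Finset.univ.filter (fun j : Fin (m * n) => ¬ (j : ℕ) < p), γ j * t j := by
          rw [Finset.mul_sum]
          exact Finset.sum_congr rfl fun j _ => by ring
      _ ≤ WG * μ := mul_le_mul_of_nonneg_left hsum_γt_neg hWG0
  have hSp_lb : WG * (1 - ω) ≤ ∑ j ∈ Finset.univ.filter (fun j : Fin (m * n) => (j : ℕ) < p),
      Complex.normSq (c j) := by nlinarith [hSn_ub, hsplit]
  have hg0 : 0 ≤ (1 - ω)⁻¹ * μ := mul_nonneg (le_of_lt (inv_pos.mpr hξ)) hμ0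
  have hne : (1 : ℝ) - ω ≠ 0 := ne_of_gt hξ
  have hSp : WG * μ ≤ ∑ j ∈ Finset.univ.filter (fun j : Fin (m * n) => (j : ℕ) < p),
      γ j * Complex.normSq (c j) := by
    calc WG * μ = ((1 - ω)⁻¹ * μ) * (WG * (1 - ω)) := by
          rw [show ((1 - ω)⁻¹ * μ) * (WG * (1 - ω)) = ((1 - ω)⁻¹ * (1 - ω)) * (WG * μ) from by
            ring, inv_mul_cancel₀ hne, one_mul]
      _ ≤ ((1 - ω)⁻¹ * μ) * (∑ j ∈ Finset.univ.filter (fun j : Fin (m * n) => (j : ℕ) < p),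
            Complex.normSq (c j)) := mul_le_mul_of_nonneg_left hSp_lb hg0
      _ = ∑ j ∈ Finset.univ.filter (fun j : Fin (m * n) => (j : ℕ) < p),
            ((1 - ω)⁻¹ * μ) * Complex.normSq (c j) := Finset.mul_sum _ _ _
      _ ≤ ∑ j ∈ Finset.univ.filter (fun j : Fin (m * n) => (j : ℕ) < p),
            γ j * Complex.normSq (c j) :=
          Finset.sum_le_sum fun j hj =>
            mul_le_mul_of_nonneg_right (hγbig j hj) (Complex.normSq_nonneg _)
  linarith [hSγn, hSp]

private lemma dot_sum_mulVec' {α β : Type*} [Fintype α] [Fintype β] {ι : Type*} (s : Finset ι)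
    (M : ι → Matrix α β ℂ) (v : α → ℂ) (x : β → ℂ) :
    v ⬝ᵥ (∑ j ∈ s, M j) *ᵥ x = ∑ j ∈ s, v ⬝ᵥ (M j) *ᵥ x := by
  classical
  induction s using Finset.cons_induction with
  | empty => simp
  | cons a s ha ih => rw [Finset.sum_cons, Finset.sum_cons, Matrix.add_mulVec,
      dotProduct_add, ih]

set_option maxHeartbeats 1000000 in
/-- sufficient condition for `k`-positivity of
`L(X) = ∑_{j≤p} γ_j F_j X F_j† − ∑_{j>p} γ_j F_j X F_j†` in terms of the
`k`-numerical range. -/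
theorem stmt_9 {m n p k : ℕ} (hk1 : 1 ≤ k) (hkm : k ≤ m) (hkn : k ≤ n)
    (F : Fin (m * n) → Matrix (Fin m) (Fin n) ℂ)
    (hF : ∀ r s, (F r * (F s)ᴴ).trace = if r = s then 1 else 0)
    (γ : Fin (m * n) → ℝ) (hγ : ∀ j, 0 ≤ γ j)
    (L : Matrix (Fin n) (Fin n) ℂ → Matrix (Fin m) (Fin m) ℂ)
    (hL : ∀ X, L X =
      (∑ j ∈ Finset.univ.filter (fun j : Fin (m * n) => (j : ℕ) < p),
        (γ j : ℂ) • (F j * X * (F j)ᴴ)) -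
      ∑ j ∈ Finset.univ.filter (fun j : Fin (m * n) => ¬ (j : ℕ) < p),
        (γ j : ℂ) • (F j * X * (F j)ᴴ))
    (hξ : 0 < 1 - maxWk k
      (∑ j ∈ Finset.univ.filter (fun j : Fin (m * n) => ¬ (j : ℕ) < p),
        (F j)ᴴ * F j))
    (hγbig : ∀ i ∈ Finset.univ.filter (fun j : Fin (m * n) => (j : ℕ) < p),
      γ i ≥ (1 - maxWk k
          (∑ j ∈ Finset.univ.filter (fun j : Fin (m * n) => ¬ (j : ℕ) < p),
            (F j)ᴴ * F j))⁻¹ *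
        maxWk k (∑ j ∈ Finset.univ.filter (fun j : Fin (m * n) => ¬ (j : ℕ) < p),
          (γ j : ℂ) • ((F j)ᴴ * F j))) :
    ∀ A : Matrix (Fin k × Fin n) (Fin k × Fin n) ℂ, A.PosSemidef →
      (Matrix.of fun u v : Fin k × Fin m =>
        L (Matrix.of fun a b => A (u.1, a) (v.1, b)) u.2 v.2).PosSemidef := by
  classical
  intro A hA
  -- completeness of the orthonormal basis F
  have hFc : ∀ q q' : Fin m × Fin n,
      (∑ j, (starRingEnd ℂ) (F j q.1 q.2) * F j q'.1 q'.2) = if q = q' then (1:ℂ) else 0 := by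
    set V : Matrix (Fin (m*n)) (Fin (m*n)) ℂ :=
      fun r s => F r (finProdFinEquiv.symm s).1 (finProdFinEquiv.symm s).2 with hVdef
    have hV : V * Vᴴ = 1 := by
      ext r s
      have : (V * Vᴴ) r s = ∑ t, F r (finProdFinEquiv.symm t).1 (finProdFinEquiv.symm t).2 *
          (starRingEnd ℂ) (F s (finProdFinEquiv.symm t).1 (finProdFinEquiv.symm t).2) := by
        rw [Matrix.mul_apply]
        simp only [Matrix.conjTranspose_apply]
        simp [hVdef, RCLike.star_def]
      rw [this, Equiv.sum_comp finProdFinEquiv.symm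
        (fun q : Fin m × Fin n => F r q.1 q.2 * (starRingEnd ℂ) (F s q.1 q.2))]
      have htr := hF r s
      rw [Matrix.trace] at htr
      simp only [Matrix.diag_apply, Matrix.mul_apply, Matrix.conjTranspose_apply,
        RCLike.star_def] at htr
      rw [Fintype.sum_prod_type, htr]
      simp [Matrix.one_apply]
    have hV2 : Vᴴ * V = 1 := mul_eq_one_comm.mp hV
    intro q q'
    have := congrFun (congrFun hV2 (finProdFinEquiv q)) (finProdFinEquiv q')
    rw [Matrix.mul_apply] at this
    simp only [Matrix.conjTranspose_apply] at this
    simp only [Matrix.mul_apply, Matrix.conjTranspose_apply, hVdef, Equiv.symm_apply_apply,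
      Matrix.one_apply, RCLike.star_def, EmbeddingLike.apply_eq_iff_eq] at this
    exact this
  obtain ⟨B, hB⟩ : ∃ B : Matrix (Fin k × Fin n) (Fin k × Fin n) ℂ, A = Bᴴ * B := by
    open scoped MatrixOrder in
    obtain ⟨X, hX, -, rfl⟩ := CFC.exists_sqrt_of_isSelfAdjoint_of_quasispectrumRestricts
      hA.isHermitian (QuasispectrumRestricts.nnreal_of_nonneg hA.nonneg)
    exact ⟨X, by rw [← Matrix.star_eq_conjTranspose, hX.star_eq]⟩
  set K : Fin (m * n) → Matrix (Fin k × Fin m) (Fin k × Fin n) ℂ :=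
    fun j => Matrix.of fun u v => if u.1 = v.1 then F j u.2 v.2 else 0 with hK
  have hKA : ∀ (j : Fin (m * n)) (u v : Fin k × Fin m), (K j * A * (K j)ᴴ) u v
      = (F j * (Matrix.of fun a b => A (u.1, a) (v.1, b)) * (F j)ᴴ) u.2 v.2 := by
    intro j u v
    simp only [Matrix.mul_apply, Matrix.conjTranspose_apply, Matrix.of_apply, hK,
      Fintype.sum_prod_type, ite_mul, zero_mul, mul_ite, mul_zero,
      apply_ite (star : ℂ → ℂ), star_zero]
    rw [Finset.sum_comm]
    refine Finset.sum_congr rfl fun y _ => ?_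
    rw [Finset.sum_ite_eq]
    simp only [Finset.mem_univ, if_true]
    congr 1
    rw [Finset.sum_comm]
    refine Finset.sum_congr rfl fun a _ => ?_
    rw [Finset.sum_ite_eq]
    simp
  have hM : (Matrix.of fun u v : Fin k × Fin m =>
        L (Matrix.of fun a b => A (u.1, a) (v.1, b)) u.2 v.2) =
      (∑ j ∈ Finset.univ.filter (fun j : Fin (m * n) => (j : ℕ) < p),
        (γ j : ℂ) • (K j * A * (K j)ᴴ)) -
      ∑ j ∈ Finset.univ.filter (fun j : Fin (m * n) => ¬ (j : ℕ) < p),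
        (γ j : ℂ) • (K j * A * (K j)ᴴ) := by
    ext u v
    simp only [Matrix.of_apply, hL, Matrix.sub_apply, Matrix.sum_apply, Matrix.smul_apply,
      smul_eq_mul]
    congr 1 <;> exact Finset.sum_congr rfl fun j _ => by rw [hKA j u v]
  rw [hM]
  refine Matrix.PosSemidef.of_dotProduct_mulVec_nonneg ?_ ?_
  · -- Hermitian
    have hterm : ∀ j, ((γ j : ℂ) • (K j * A * (K j)ᴴ))ᴴ = (γ j : ℂ) • (K j * A * (K j)ᴴ) := by
      intro j
      rw [Matrix.conjTranspose_smul, Matrix.conjTranspose_mul, Matrix.conjTranspose_mul,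
        Matrix.conjTranspose_conjTranspose, hA.1, Matrix.mul_assoc]
      congr 1
      simp [Complex.star_def, Complex.conj_ofReal]
    show _ᴴ = _
    rw [Matrix.conjTranspose_sub, Matrix.conjTranspose_sum, Matrix.conjTranspose_sum]
    simp only [hterm]
  · intro x
    set y : Fin (m * n) → (Fin k × Fin n → ℂ) := fun j => (K j)ᴴ *ᵥ x with hy
    set d : Fin (m * n) → (Fin k × Fin n → ℂ) := fun j => B *ᵥ y j with hd
    have hterm : ∀ j, star x ⬝ᵥ ((K j * A * (K j)ᴴ) *ᵥ x)
        = ∑ r : Fin k × Fin n, (Complex.normSq (d j r) : ℂ) := by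
      intro j
      have e1 : (K j * A * (K j)ᴴ) *ᵥ x = K j *ᵥ (Bᴴ *ᵥ (B *ᵥ ((K j)ᴴ *ᵥ x))) := by
        rw [hB, Matrix.mulVec_mulVec, Matrix.mulVec_mulVec, Matrix.mulVec_mulVec]
        congr 1
        simp only [Matrix.mul_assoc]
      rw [e1, Matrix.dotProduct_mulVec (star x) (K j)]
      have e2 : star x ᵥ* K j = star (y j) := by
        rw [hy]
        simp only []
        rw [Matrix.star_mulVec, Matrix.conjTranspose_conjTranspose]
      rw [e2, Matrix.dotProduct_mulVec (star (y j)) Bᴴ,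
        show star (y j) ᵥ* Bᴴ = star (B *ᵥ y j) from (Matrix.star_mulVec B (y j)).symm]
      simp only [dotProduct, Pi.star_apply, RCLike.star_def, hd]
      exact Finset.sum_congr rfl fun r _ => (Complex.normSq_eq_conj_mul_self).symm
    have hexp : star x ⬝ᵥ (((∑ j ∈ Finset.univ.filter (fun j : Fin (m * n) => (j : ℕ) < p),
          (γ j : ℂ) • (K j * A * (K j)ᴴ)) -
        ∑ j ∈ Finset.univ.filter (fun j : Fin (m * n) => ¬ (j : ℕ) < p),
          (γ j : ℂ) • (K j * A * (K j)ᴴ)) *ᵥ x)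
        = ((∑ j ∈ Finset.univ.filter (fun j : Fin (m * n) => (j : ℕ) < p),
            γ j * (∑ r : Fin k × Fin n, Complex.normSq (d j r)) : ℝ) : ℂ)
          - ((∑ j ∈ Finset.univ.filter (fun j : Fin (m * n) => ¬ (j : ℕ) < p),
            γ j * (∑ r : Fin k × Fin n, Complex.normSq (d j r)) : ℝ) : ℂ) := by
      rw [Matrix.sub_mulVec, dotProduct_sub, dot_sum_mulVec', dot_sum_mulVec']
      have hs : ∀ s : Finset (Fin (m * n)),
          ∑ j ∈ s, star x ⬝ᵥ ((γ j : ℂ) • (K j * A * (K j)ᴴ)) *ᵥ x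
            = ((∑ j ∈ s, γ j * (∑ r : Fin k × Fin n, Complex.normSq (d j r)) : ℝ) : ℂ) := by
        intro s
        push_cast
        refine Finset.sum_congr rfl fun j _ => ?_
        rw [Matrix.smul_mulVec, dotProduct_smul, smul_eq_mul, hterm j]
      rw [hs, hs]
    rw [hexp, ← Complex.ofReal_sub, Complex.zero_le_real, sub_nonneg]
    have swap : ∀ s : Finset (Fin (m * n)),
        ∑ j ∈ s, γ j * (∑ r : Fin k × Fin n, Complex.normSq (d j r))
          = ∑ r : Fin k × Fin n, ∑ j ∈ s, γ j * Complex.normSq (d j r) := by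
      intro s
      simp only [Finset.mul_sum]
      exact Finset.sum_comm
    rw [swap, swap]
    refine Finset.sum_le_sum fun r _ => ?_
    set P : Matrix (Fin n) (Fin k) ℂ :=
      Matrix.of fun b v1 => (starRingEnd ℂ) (B r (v1, b)) with hP
    set Q : Matrix (Fin k) (Fin m) ℂ :=
      Matrix.of fun v1 v2 => (starRingEnd ℂ) (x (v1, v2)) with hQ
    have hdc : ∀ j, Complex.normSq (d j r)
        = Complex.normSq (∑ z : Fin m × Fin n, F j z.1 z.2 * ((P * Q) z.2 z.1)) := by
      intro j
      rw [← Complex.normSq_conj (d j r)]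
      congr 1
      have e0 : (starRingEnd ℂ) (d j r) = ∑ v : Fin k × Fin n,
          (starRingEnd ℂ) (B r v) * (∑ u' : Fin k × Fin m, K j u' v * (starRingEnd ℂ) (x u')) := by
        have e00 : d j r = ∑ v : Fin k × Fin n, B r v * ∑ u' : Fin k × Fin m,
            (starRingEnd ℂ) (K j u' v) * x u' := by
          simp only [hd, hy, Matrix.mulVec, dotProduct, Matrix.conjTranspose_apply,
            RCLike.star_def]
        rw [e00, map_sum]
        refine Finset.sum_congr rfl fun v _ => ?_
        rw [_root_.map_mul, map_sum]
        congr 1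
        refine Finset.sum_congr rfl fun u' _ => ?_
        rw [_root_.map_mul, Complex.conj_conj]
      have lhs_eq : (starRingEnd ℂ) (d j r)
          = ∑ v2 : Fin m, ∑ b : Fin n, ∑ v1 : Fin k,
            F j v2 b * ((starRingEnd ℂ) (B r (v1, b)) * (starRingEnd ℂ) (x (v1, v2))) := by
        rw [e0, Fintype.sum_prod_type]
        have e4 : ∀ v1 : Fin k, ∀ b : Fin n,
            (∑ u' : Fin k × Fin m, K j u' (v1, b) * (starRingEnd ℂ) (x u'))
            = ∑ v2 : Fin m, F j v2 b * (starRingEnd ℂ) (x (v1, v2)) := by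
          intro v1 b
          rw [Fintype.sum_prod_type]
          simp only [hK, Matrix.of_apply, ite_mul, zero_mul]
          rw [Finset.sum_comm]
          refine Finset.sum_congr rfl fun v2 _ => ?_
          rw [Finset.sum_ite_eq' Finset.univ v1
            (fun w1 => F j v2 b * (starRingEnd ℂ) (x (w1, v2)))]
          simp
        calc ∑ v1 : Fin k, ∑ b : Fin n, (starRingEnd ℂ) (B r (v1, b)) *
              (∑ u' : Fin k × Fin m, K j u' (v1, b) * (starRingEnd ℂ) (x u'))
            = ∑ v1 : Fin k, ∑ b : Fin n, ∑ v2 : Fin m, F j v2 b *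
              ((starRingEnd ℂ) (B r (v1, b)) * (starRingEnd ℂ) (x (v1, v2))) := by
              refine Finset.sum_congr rfl fun v1 _ => Finset.sum_congr rfl fun b _ => ?_
              rw [e4 v1 b, Finset.mul_sum]
              exact Finset.sum_congr rfl fun v2 _ => by ring
          _ = ∑ b : Fin n, ∑ v1 : Fin k, ∑ v2 : Fin m, F j v2 b *
              ((starRingEnd ℂ) (B r (v1, b)) * (starRingEnd ℂ) (x (v1, v2))) :=
              Finset.sum_comm
          _ = ∑ b : Fin n, ∑ v2 : Fin m, ∑ v1 : Fin k, F j v2 b *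
              ((starRingEnd ℂ) (B r (v1, b)) * (starRingEnd ℂ) (x (v1, v2))) :=
              Finset.sum_congr rfl fun b _ => Finset.sum_comm
          _ = ∑ v2 : Fin m, ∑ b : Fin n, ∑ v1 : Fin k, F j v2 b *
              ((starRingEnd ℂ) (B r (v1, b)) * (starRingEnd ℂ) (x (v1, v2))) :=
              Finset.sum_comm
      have rhs_eq : (∑ z : Fin m × Fin n, F j z.1 z.2 * ((P * Q) z.2 z.1))
          = ∑ v2 : Fin m, ∑ b : Fin n, ∑ v1 : Fin k,
            F j v2 b * ((starRingEnd ℂ) (B r (v1, b)) * (starRingEnd ℂ) (x (v1, v2))) := by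
        rw [Fintype.sum_prod_type]
        refine Finset.sum_congr rfl fun v2 _ => Finset.sum_congr rfl fun b _ => ?_
        rw [Matrix.mul_apply, Finset.mul_sum]
        refine Finset.sum_congr rfl fun v1 _ => ?_
        simp only [hP, hQ, Matrix.of_apply]
      rw [lhs_eq, rhs_eq]
    simp only [hdc]
    exact key hkn F hFc γ hγ hξ hγbig (P * Q) P Q rfl
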